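/- Let f be a polynomial with f(0) = 0 and f'(0) = 0, c ∈ ℂ with |c| > 2, and f_n the associated Fibonacci system. Then for all n ≥ 4, |f_n(0)| ≥ (|c| − 1)·|f_{n-1}(0)|; in particular the sequence (f_n(0)) is unbounded and 0 ∉ K_c. -/

import Mathlib

theorem stmt11 (f : Polynomial ℂ) (hf0 : f.eval 0 = 0) (hf1 : f.derivative.eval 0 = 0)
    (c : ℂ) (hc : ‖c‖ > 2)
    (fs : ℕ → ℂ → ℂ)
    (h0 : ∀ z, fs 0 z = z) (h1 : ∀ z, fs 1 z = f.eval z)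
    (hrec : ∀ n z, fs (n + 2) z = fs (n + 1) z * fs n z + c) :
    (∀ n : ℕ, 4 ≤ n →
      ‖fs n 0‖ ≥ (‖c‖ - 1) * ‖fs (n - 1) 0‖) ∧
    ¬ BddAbove (Set.range fun n => ‖fs n 0‖) := by
  set r := ‖c‖ with hr
  have hfs1 : fs 1 0 = 0 := by rw [h1, hf0]
  have hfs2 : fs 2 0 = c := by rw [show (2:ℕ) = 0 + 2 from rfl, hrec, h0]; ring
  have hfs3 : fs 3 0 = c := by rw [show (3:ℕ) = 1 + 2 from rfl, hrec, hfs1, hfs2]; ring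
  have key : ∀ n : ℕ, r ≤ ‖fs (n + 3) 0‖ ∧
      (r - 1) * ‖fs (n + 3) 0‖ ≤ ‖fs (n + 4) 0‖ := by
    intro n
    induction n with
    | zero =>
      have h4 : fs 4 0 = c * c + c := by rw [show (4:ℕ) = 2 + 2 from rfl, hrec, hfs3, hfs2]
      constructor
      · rw [hfs3]
      · rw [hfs3, h4]
        have h5 : ‖c * c‖ - ‖c‖ ≤ ‖c * c + c‖ := by
          have := norm_add_le (c * c + c) (-c)
          simp only [add_neg_cancel_right, norm_neg, norm_mul] at this ⊢
          linarith
        rw [norm_mul] at h5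
        nlinarith
    | succ n ih =>
      obtain ⟨ha, hb⟩ := ih
      set a := ‖fs (n + 3) 0‖
      set b := ‖fs (n + 4) 0‖
      have hb' : r ≤ b := by nlinarith
      have h5 : fs (n + 5) 0 = fs (n + 4) 0 * fs (n + 3) 0 + c := by
        have := hrec (n + 3) 0; convert this using 3 <;> omega
      have hlow : b * a - r ≤ ‖fs (n + 5) 0‖ := by
        rw [h5]
        have := norm_add_le (fs (n + 4) 0 * fs (n + 3) 0 + c) (-c)
        simp only [add_neg_cancel_right, norm_neg, norm_mul] at this
        linarith
      have hgoal : (r - 1) * b ≤ ‖fs (n + 5) 0‖ := by nlinarith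
      have hr2 : r ≤ ‖fs (n + 4) 0‖ := hb'
      exact ⟨by simpa [show n + 1 + 3 = n + 4 from rfl] using hr2,
        by simpa [show n + 1 + 4 = n + 5 from rfl, show n + 1 + 3 = n + 4 from rfl] using hgoal⟩
  have part1 : ∀ n : ℕ, 4 ≤ n →
      ‖fs n 0‖ ≥ (r - 1) * ‖fs (n - 1) 0‖ := by
    intro n hn
    obtain ⟨m, rfl⟩ : ∃ m, n = m + 4 := ⟨n - 4, by omega⟩
    have := (key m).2
    simpa [show m + 4 - 1 = m + 3 from by omega] using this
  refine ⟨part1, ?_⟩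
  have grow : ∀ n : ℕ, (r - 1) ^ n * r ≤ ‖fs (n + 3) 0‖ := by
    intro n
    induction n with
    | zero => simpa using (key 0).1
    | succ n ih =>
      have h2 := (key n).2
      have hr1 : (0:ℝ) < r - 1 := by linarith
      calc (r - 1) ^ (n + 1) * r = (r - 1) * ((r - 1) ^ n * r) := by ring
        _ ≤ (r - 1) * ‖fs (n + 3) 0‖ := by nlinarith
        _ ≤ ‖fs (n + 4) 0‖ := h2
        _ = ‖fs (n + 1 + 3) 0‖ := rfl
  rintro ⟨M, hM⟩
  have h1lt : (1:ℝ) < r - 1 := by linarith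
  obtain ⟨n, hn⟩ := pow_unbounded_of_one_lt M h1lt
  have hle : ‖fs (n + 3) 0‖ ≤ M := hM ⟨n + 3, rfl⟩
  have : (r - 1) ^ n ≤ (r - 1) ^ n * r := by nlinarith [pow_pos (by linarith : (0:ℝ) < r - 1) n]
  linarith [grow n]
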